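/- In the relaxed (pruning-scan) game, solvability does not depend on which match is chosen as the first pair of a group: if the board is relaxed-solvable by some sequence, then for any group g and any choice of two currently playable tiles of g as g's first pair at the moment g is first played, a completing relaxed solution still exists ('it is impossible to play the wrong match' in the scan). -/

import Mathlib

/-- A board is a finite multiset of isolated stacks; each stack is a list of
tile groups, with the head of the list being the top tile of the stack. -/
abbrev Board (G : Type*) := Multiset (List G)

variable {G : Type*} [DecidableEq G]

/-- The number of tiles of group `g` remaining on the board. -/
def tileCount (B : Board G) (g : G) : ℕ := (B.map (fun s => s.count g)).sum

/-- The total number of tiles on the board. -/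
def totalTiles (B : Board G) : ℕ := (B.map List.length).sum

/-- The board obtained by removing the (playable) top tiles of stacks `s₁` and
`s₂`, the remaining stacks being `rest`; emptied stacks disappear. -/
def play (s₁ s₂ : List G) (rest : Board G) : Board G :=
  Multiset.filter (fun s => s ≠ []) (s₁.tail ::ₘ s₂.tail ::ₘ rest)

/-- A legal move: remove two playable (top) tiles of the same group. -/
def Move (B B' : Board G) : Prop :=
  ∃ (g : G) (s₁ s₂ : List G) (rest : Board G),
    B = s₁ ::ₘ s₂ ::ₘ rest ∧ s₁.head? = some g ∧ s₂.head? = some g ∧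
    B' = play s₁ s₂ rest

/-- A board is solvable iff some sequence of legal moves empties it. -/
def Solvable (B : Board G) : Prop := Relation.ReflTransGen Move B 0

/-- All stacks are nonempty and of height at most two. -/
def HeightsOK (B : Board G) : Prop := ∀ s ∈ B, s ≠ [] ∧ s.length ≤ 2

/-- A blocked cycle: distinct groups `p 0, …, p k`, each with exactly two
remaining tiles, such that for each `i` there is a height-two stack with a
`p (i+1)`-tile (cyclically) on top of a `p i`-tile. -/
def BlockedCycle (B : Board G) {k : ℕ} (p : Fin (k + 1) → G) : Prop :=
  Function.Injective p ∧ (∀ i, tileCount B (p i) = 2) ∧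
    ∀ i, [p (i + 1), p i] ∈ B

/-- The board contains some blocked cycle. -/
def HasBlockedCycle (B : Board G) : Prop :=
  ∃ (k : ℕ) (p : Fin (k + 1) → G), BlockedCycle B p

/-- A relaxed (pruning-scan) move relative to the initial board `B₀`: either
remove a playable pair of a group no tile of which has been removed yet, or
remove a single playable tile of a group from which at least two tiles have
already been removed. -/
def RMove (B₀ : Board G) (C C' : Board G) : Prop :=
  (∃ (g : G) (s₁ s₂ : List G) (rest : Board G),
      C = s₁ ::ₘ s₂ ::ₘ rest ∧ s₁.head? = some g ∧ s₂.head? = some g ∧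
      tileCount C g = tileCount B₀ g ∧ C' = play s₁ s₂ rest) ∨
  (∃ (g : G) (s : List G) (rest : Board G),
      C = s ::ₘ rest ∧ s.head? = some g ∧
      tileCount C g + 2 ≤ tileCount B₀ g ∧
      C' = Multiset.filter (fun t => t ≠ []) (s.tail ::ₘ rest))

/-- Relaxed solvability of a position `C` in the relaxed game started at `B₀`. -/
def RSolvable (B₀ C : Board G) : Prop := Relation.ReflTransGen (RMove B₀) C 0

set_option linter.unusedSectionVars false

lemma head?_ne_nil {s : List G} {g : G} (h : s.head? = some g) : s ≠ [] := by
  cases s <;> simp_all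

lemma tileCount_cons (a : List G) (m : Board G) (g : G) :
    tileCount (a ::ₘ m) g = a.count g + tileCount m g := by
  simp [tileCount]

lemma count_tail_head {s : List G} {g : G} (h : s.head? = some g) :
    s.count g = s.tail.count g + 1 := by
  cases s with
  | nil => simp at h
  | cons a t => simp_all [List.count_cons]

lemma count_tail_ne {s : List G} {g : G} (h : s.head? = some g) {a : G} (ha : a ≠ g) :
    s.count a = s.tail.count a := by
  cases s with
  | nil => simp at h
  | cons b t =>
    simp_all [List.count_cons]
    exact fun e => ha e.symm

lemma count_tail_le (s : List G) (a : G) : s.tail.count a ≤ s.count a :=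
  (List.tail_sublist s).count_le a

lemma tileCount_filter (m : Board G) (g : G) :
    tileCount (Multiset.filter (fun t => t ≠ []) m) g = tileCount m g := by
  induction m using Multiset.induction with
  | empty => simp [tileCount]
  | cons a m ih =>
    by_cases ha : a = []
    · subst ha
      rw [Multiset.filter_cons_of_neg _ (by simp), tileCount_cons]
      simp [ih]
    · rw [Multiset.filter_cons_of_pos _ (by simpa using ha), tileCount_cons, tileCount_cons, ih]

lemma filter_cons_pos (a : List G) (ha : a ≠ []) (m : Board G) :
    Multiset.filter (fun t => t ≠ []) (a ::ₘ m) = a ::ₘ Multiset.filter (fun t => t ≠ []) m :=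
  Multiset.filter_cons_of_pos _ (by simpa using ha)

lemma filter_cons_filter (a : List G) (m : Board G) :
    Multiset.filter (fun t => t ≠ []) (a ::ₘ Multiset.filter (fun t => t ≠ []) m)
      = Multiset.filter (fun t => t ≠ []) (a ::ₘ m) := by
  simp [Multiset.filter_cons, Multiset.filter_filter]

lemma filter_cons2_filter (a b : List G) (m : Board G) :
    Multiset.filter (fun t => t ≠ []) (a ::ₘ b ::ₘ Multiset.filter (fun t => t ≠ []) m)
      = Multiset.filter (fun t => t ≠ []) (a ::ₘ b ::ₘ m) := by
  simp [Multiset.filter_cons, Multiset.filter_filter]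

lemma single_preserve (B₀ : Board G) {D : Board G} (hsolv : RSolvable B₀ D) :
    ∀ {h : G} {s : List G} {rest : Board G}, D = s ::ₘ rest → s.head? = some h →
      tileCount D h + 2 ≤ tileCount B₀ h →
      RSolvable B₀ (Multiset.filter (fun t => t ≠ []) (s.tail ::ₘ rest)) := by
  induction hsolv using Relation.ReflTransGen.head_induction_on with
  | refl =>
    intro h s rest hD _ _
    exact absurd hD.symm (Multiset.cons_ne_zero)
  | head hmove htail ih =>
    intro h s rest hD hs hcnt
    subst hD
    rcases hmove with ⟨g', s₁, s₂, rest', hC, h1, h2, hcnt', hplay⟩ |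
      ⟨g', s', rest', hC, h1, hcnt', hres⟩
    · -- pair move on (s₁,s₂); it cannot involve s since g' is fresh but h is opened
      have hgh : g' ≠ h := by rintro rfl; omega
      have hss1 : s ≠ s₁ := by
        intro e; rw [e, h1] at hs; exact hgh (Option.some_injective _ hs)
      have hss2 : s ≠ s₂ := by
        intro e; rw [e, h2] at hs; exact hgh (Option.some_injective _ hs)
      have hmem : s ∈ s₁ ::ₘ s₂ ::ₘ rest' := by
        rw [← hC]; exact Multiset.mem_cons_self s rest
      simp only [Multiset.mem_cons, hss1, hss2, false_or] at hmem
      obtain ⟨rest'', rfl⟩ := Multiset.exists_cons_of_mem hmem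
      have hrest : rest = s₁ ::ₘ s₂ ::ₘ rest'' := by
        have e : s ::ₘ rest = s ::ₘ s₁ ::ₘ s₂ ::ₘ rest'' := by
          rw [hC]; ext x; simp [Multiset.count_cons]; ring
        exact (Multiset.cons_inj_right s).mp e
      subst hrest
      subst hplay
      -- decompose D' = play s₁ s₂ (s ::ₘ rest'')
      have hD' : play s₁ s₂ (s ::ₘ rest'')
          = s ::ₘ Multiset.filter (fun t => t ≠ []) (s₁.tail ::ₘ s₂.tail ::ₘ rest'') := by
        unfold play
        rw [show s₁.tail ::ₘ s₂.tail ::ₘ s ::ₘ rest'' = s ::ₘ s₁.tail ::ₘ s₂.tail ::ₘ rest''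
          from by ext x; simp [Multiset.count_cons]; ring]
        exact filter_cons_pos s (head?_ne_nil hs) _
      have hcntD' : tileCount (play s₁ s₂ (s ::ₘ rest'')) h + 2 ≤ tileCount B₀ h := by
        have e1 : tileCount (play s₁ s₂ (s ::ₘ rest'')) h
            = s₁.tail.count h + (s₂.tail.count h + (s.count h + tileCount rest'' h)) := by
          unfold play; rw [tileCount_filter]; simp [tileCount_cons]
        have e2 : tileCount (s ::ₘ s₁ ::ₘ s₂ ::ₘ rest'') h
            = s.count h + (s₁.count h + (s₂.count h + tileCount rest'' h)) := by
          simp [tileCount_cons]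
        have l1 := count_tail_le s₁ h
        have l2 := count_tail_le s₂ h
        omega
      have hE' : RSolvable B₀
          (Multiset.filter (fun t => t ≠ [])
            (s.tail ::ₘ s₁.tail ::ₘ s₂.tail ::ₘ rest'')) := by
        have := ih hD' hs hcntD'
        rwa [filter_cons_filter] at this
      -- from goal board, do the pair move
      have hgoal : Multiset.filter (fun t => t ≠ []) (s.tail ::ₘ s₁ ::ₘ s₂ ::ₘ rest'')
          = s₁ ::ₘ s₂ ::ₘ Multiset.filter (fun t => t ≠ []) (s.tail ::ₘ rest'') := by
        rw [show s.tail ::ₘ s₁ ::ₘ s₂ ::ₘ rest'' = s₁ ::ₘ s₂ ::ₘ s.tail ::ₘ rest''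
          from by ext x; simp [Multiset.count_cons]; ring,
          filter_cons_pos s₁ (head?_ne_nil h1), filter_cons_pos s₂ (head?_ne_nil h2)]
      have hplayE : play s₁ s₂ (Multiset.filter (fun t => t ≠ []) (s.tail ::ₘ rest''))
          = Multiset.filter (fun t => t ≠ []) (s.tail ::ₘ s₁.tail ::ₘ s₂.tail ::ₘ rest'') := by
        unfold play
        rw [filter_cons2_filter]
        exact congrArg _ (by ext x; simp [Multiset.count_cons]; ring)
      have hcntE : tileCount (s₁ ::ₘ s₂ ::ₘ Multiset.filter (fun t => t ≠ []) (s.tail ::ₘ rest'')) g'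
          = tileCount B₀ g' := by
        have e1 : tileCount (s₁ ::ₘ s₂ ::ₘ Multiset.filter (fun t => t ≠ []) (s.tail ::ₘ rest'')) g'
            = s₁.count g' + (s₂.count g' + (s.tail.count g' + tileCount rest'' g')) := by
          simp [tileCount_cons, tileCount_filter]
        have e2 : tileCount (s ::ₘ s₁ ::ₘ s₂ ::ₘ rest'') g'
            = s.count g' + (s₁.count g' + (s₂.count g' + tileCount rest'' g')) := by
          simp [tileCount_cons]
        have e3 := count_tail_ne hs hgh
        omega
      rw [hgoal]
      refine Relation.ReflTransGen.head (Or.inl ⟨g', s₁, s₂, _, rfl, h1, h2, hcntE, rfl⟩) ?_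
      rwa [hplayE]
    · -- single move on s'
      subst hres
      rcases Multiset.cons_eq_cons.mp hC with ⟨rfl, rfl⟩ | ⟨hne, cs, hrest, hrest'⟩
      · exact htail
      · subst hrest; subst hrest'
        have hD' : Multiset.filter (fun t => t ≠ []) (s'.tail ::ₘ s ::ₘ cs)
            = s ::ₘ Multiset.filter (fun t => t ≠ []) (s'.tail ::ₘ cs) := by
          rw [show s'.tail ::ₘ s ::ₘ cs = s ::ₘ s'.tail ::ₘ cs from Multiset.cons_swap _ _ _]
          exact filter_cons_pos s (head?_ne_nil hs) _
        have hcntD' : tileCount (Multiset.filter (fun t => t ≠ []) (s'.tail ::ₘ s ::ₘ cs)) h + 2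
            ≤ tileCount B₀ h := by
          have e1 : tileCount (Multiset.filter (fun t => t ≠ []) (s'.tail ::ₘ s ::ₘ cs)) h
              = s'.tail.count h + (s.count h + tileCount cs h) := by
            simp [tileCount_cons, tileCount_filter]
          have e2 : tileCount (s ::ₘ s' ::ₘ cs) h
              = s.count h + (s'.count h + tileCount cs h) := by
            simp [tileCount_cons]
          have l1 := count_tail_le s' h
          omega
        have hE' : RSolvable B₀
            (Multiset.filter (fun t => t ≠ []) (s.tail ::ₘ s'.tail ::ₘ cs)) := by
          have := ih hD' hs hcntD'
          rwa [filter_cons_filter] at this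
        have hgoal : Multiset.filter (fun t => t ≠ []) (s.tail ::ₘ s' ::ₘ cs)
            = s' ::ₘ Multiset.filter (fun t => t ≠ []) (s.tail ::ₘ cs) := by
          rw [show s.tail ::ₘ s' ::ₘ cs = s' ::ₘ s.tail ::ₘ cs from Multiset.cons_swap _ _ _]
          exact filter_cons_pos s' (head?_ne_nil h1) _
        have hcntE : tileCount (s' ::ₘ Multiset.filter (fun t => t ≠ []) (s.tail ::ₘ cs)) g' + 2
            ≤ tileCount B₀ g' := by
          have e1 : tileCount (s' ::ₘ Multiset.filter (fun t => t ≠ []) (s.tail ::ₘ cs)) g'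
              = s'.count g' + (s.tail.count g' + tileCount cs g') := by
            simp [tileCount_cons, tileCount_filter]
          have e2 : tileCount (s ::ₘ s' ::ₘ cs) g'
              = s.count g' + (s'.count g' + tileCount cs g') := by
            simp [tileCount_cons]
          have l1 := count_tail_le s g'
          omega
        rw [hgoal]
        refine Relation.ReflTransGen.head (Or.inr ⟨g', s', _, rfl, h1, hcntE, rfl⟩) ?_
        rw [filter_cons_filter]
        rw [show s'.tail ::ₘ s.tail ::ₘ cs = s.tail ::ₘ s'.tail ::ₘ cs from Multiset.cons_swap _ _ _]
        exact hE'

lemma swap_play (a b : List G) (r : Board G) : play a b r = play b a r := by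
  unfold play; rw [Multiset.cons_swap]

lemma core (B₀ C : Board G) (g : G)
    (hfresh : tileCount C g = tileCount B₀ g)
    (s₁ s₂ t₁ t₂ : List G) (r₁ r₂ : Board G)
    (h1 : C = s₁ ::ₘ s₂ ::ₘ r₁) (hs₁ : s₁.head? = some g) (hs₂ : s₂.head? = some g)
    (h2 : C = t₁ ::ₘ t₂ ::ₘ r₂) (ht₁ : t₁.head? = some g) (ht₂ : t₂.head? = some g)
    (hsolv : RSolvable B₀ (play s₁ s₂ r₁))
    (hcase : t₁ = s₁ ∨ (t₁ ≠ s₁ ∧ t₁ ≠ s₂ ∧ t₂ ≠ s₁ ∧ t₂ ≠ s₂)) :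
    RSolvable B₀ (play t₁ t₂ r₂) := by
  rcases hcase with e | ⟨n11, n12, n21, n22⟩
  · -- t₁ coincides with s₁ (as a stack value)
    rw [e] at h2 ⊢
    have hC2 : s₂ ::ₘ r₁ = t₂ ::ₘ r₂ :=
      (Multiset.cons_inj_right s₁).mp (h1.symm.trans h2)
    rcases Multiset.cons_eq_cons.mp hC2 with ⟨e2, rfl⟩ | ⟨hne, cs, hcs1, hcs2⟩
    · rw [← e2]; exact hsolv
    · subst hcs1; subst hcs2
      have hC : C = s₁ ::ₘ s₂ ::ₘ t₂ ::ₘ cs := h1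
      have hcC : tileCount C g
          = s₁.count g + (s₂.count g + (t₂.count g + tileCount cs g)) := by
        rw [hC]; simp [tileCount_cons]
      have l1 := count_tail_head hs₁
      have l2 := count_tail_head hs₂
      have l3 := count_tail_head ht₂
      -- remove the top of t₂ from D₁ = play s₁ s₂ (t₂ ::ₘ cs)
      have hD1 : play s₁ s₂ (t₂ ::ₘ cs)
          = t₂ ::ₘ Multiset.filter (fun t => t ≠ []) (s₁.tail ::ₘ s₂.tail ::ₘ cs) := by
        unfold play
        rw [show s₁.tail ::ₘ s₂.tail ::ₘ t₂ ::ₘ cs = t₂ ::ₘ s₁.tail ::ₘ s₂.tail ::ₘ cs from by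
          ext x; simp [Multiset.count_cons]; ring]
        exact filter_cons_pos t₂ (head?_ne_nil ht₂) _
      have hcnt1 : tileCount (play s₁ s₂ (t₂ ::ₘ cs)) g + 2 ≤ tileCount B₀ g := by
        have e1 : tileCount (play s₁ s₂ (t₂ ::ₘ cs)) g
            = s₁.tail.count g + (s₂.tail.count g + (t₂.count g + tileCount cs g)) := by
          simp [play, tileCount_filter, tileCount_cons]
        omega
      have hE : RSolvable B₀
          (Multiset.filter (fun t => t ≠ []) (t₂.tail ::ₘ s₁.tail ::ₘ s₂.tail ::ₘ cs)) := by
        have := single_preserve B₀ hsolv hD1 ht₂ hcnt1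
        rwa [filter_cons_filter] at this
      -- goal : play s₁ t₂ (s₂ ::ₘ cs)
      have hgoal : play s₁ t₂ (s₂ ::ₘ cs)
          = s₂ ::ₘ Multiset.filter (fun t => t ≠ []) (s₁.tail ::ₘ t₂.tail ::ₘ cs) := by
        unfold play
        rw [show s₁.tail ::ₘ t₂.tail ::ₘ s₂ ::ₘ cs = s₂ ::ₘ s₁.tail ::ₘ t₂.tail ::ₘ cs from by
          ext x; simp [Multiset.count_cons]; ring]
        exact filter_cons_pos s₂ (head?_ne_nil hs₂) _
      have hcnt2 : tileCount
          (s₂ ::ₘ Multiset.filter (fun t => t ≠ []) (s₁.tail ::ₘ t₂.tail ::ₘ cs)) g + 2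
          ≤ tileCount B₀ g := by
        have e1 : tileCount
            (s₂ ::ₘ Multiset.filter (fun t => t ≠ []) (s₁.tail ::ₘ t₂.tail ::ₘ cs)) g
            = s₂.count g + (s₁.tail.count g + (t₂.tail.count g + tileCount cs g)) := by
          simp [tileCount_cons, tileCount_filter]
        omega
      rw [hgoal]
      refine Relation.ReflTransGen.head (Or.inr ⟨g, s₂, _, rfl, hs₂, hcnt2, rfl⟩) ?_
      rw [filter_cons_filter]
      rw [show s₂.tail ::ₘ s₁.tail ::ₘ t₂.tail ::ₘ cs = t₂.tail ::ₘ s₁.tail ::ₘ s₂.tail ::ₘ cs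
        from by ext x; simp [Multiset.count_cons]; ring]
      exact hE
  · -- the four stack occurrences are pairwise disjoint
    have ht1m : t₁ ∈ r₁ := by
      have : t₁ ∈ C := by rw [h2]; exact Multiset.mem_cons_self t₁ _
      rw [h1] at this
      simpa [Multiset.mem_cons, n11, n12] using this
    obtain ⟨u, hu⟩ := Multiset.exists_cons_of_mem ht1m
    have hC2 : t₂ ::ₘ r₂ = s₁ ::ₘ s₂ ::ₘ u := by
      have e : t₁ ::ₘ t₂ ::ₘ r₂ = t₁ ::ₘ s₁ ::ₘ s₂ ::ₘ u := by
        rw [← h2, h1, hu]; ext x; simp [Multiset.count_cons]; ring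
      exact (Multiset.cons_inj_right t₁).mp e
    have ht2m : t₂ ∈ u := by
      have : t₂ ∈ s₁ ::ₘ s₂ ::ₘ u := by rw [← hC2]; exact Multiset.mem_cons_self t₂ _
      simpa [Multiset.mem_cons, n21, n22] using this
    obtain ⟨v, hv⟩ := Multiset.exists_cons_of_mem ht2m
    have hr2 : r₂ = s₁ ::ₘ s₂ ::ₘ v := by
      have e : t₂ ::ₘ r₂ = t₂ ::ₘ s₁ ::ₘ s₂ ::ₘ v := by
        rw [hC2, hv]; ext x; simp [Multiset.count_cons]; ring
      exact (Multiset.cons_inj_right t₂).mp e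
    have hr1 : r₁ = t₁ ::ₘ t₂ ::ₘ v := by rw [hu, hv]
    subst hr1; subst hr2
    have hcC : tileCount C g
        = s₁.count g + (s₂.count g + (t₁.count g + (t₂.count g + tileCount v g))) := by
      rw [h1]; simp [tileCount_cons]
    have l1 := count_tail_head hs₁
    have l2 := count_tail_head hs₂
    have l3 := count_tail_head ht₁
    have l4 := count_tail_head ht₂
    -- remove the top of t₁ from D₁
    have hD1 : play s₁ s₂ (t₁ ::ₘ t₂ ::ₘ v)
        = t₁ ::ₘ Multiset.filter (fun t => t ≠ []) (s₁.tail ::ₘ s₂.tail ::ₘ t₂ ::ₘ v) := by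
      unfold play
      rw [show s₁.tail ::ₘ s₂.tail ::ₘ t₁ ::ₘ t₂ ::ₘ v
          = t₁ ::ₘ s₁.tail ::ₘ s₂.tail ::ₘ t₂ ::ₘ v from by
        ext x; simp [Multiset.count_cons]; ring]
      exact filter_cons_pos t₁ (head?_ne_nil ht₁) _
    have hcnt1 : tileCount (play s₁ s₂ (t₁ ::ₘ t₂ ::ₘ v)) g + 2 ≤ tileCount B₀ g := by
      have e1 : tileCount (play s₁ s₂ (t₁ ::ₘ t₂ ::ₘ v)) g
          = s₁.tail.count g + (s₂.tail.count g + (t₁.count g + (t₂.count g + tileCount v g))) := by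
        simp [play, tileCount_filter, tileCount_cons]
      omega
    have hE1 : RSolvable B₀
        (Multiset.filter (fun t => t ≠ []) (t₁.tail ::ₘ s₁.tail ::ₘ s₂.tail ::ₘ t₂ ::ₘ v)) := by
      have := single_preserve B₀ hsolv hD1 ht₁ hcnt1
      rwa [filter_cons_filter] at this
    -- remove the top of t₂
    have hD2 : Multiset.filter (fun t => t ≠ []) (t₁.tail ::ₘ s₁.tail ::ₘ s₂.tail ::ₘ t₂ ::ₘ v)
        = t₂ ::ₘ Multiset.filter (fun t => t ≠ []) (t₁.tail ::ₘ s₁.tail ::ₘ s₂.tail ::ₘ v) := by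
      rw [show t₁.tail ::ₘ s₁.tail ::ₘ s₂.tail ::ₘ t₂ ::ₘ v
          = t₂ ::ₘ t₁.tail ::ₘ s₁.tail ::ₘ s₂.tail ::ₘ v from by
        ext x; simp [Multiset.count_cons]; ring]
      exact filter_cons_pos t₂ (head?_ne_nil ht₂) _
    have hcnt2 : tileCount
        (Multiset.filter (fun t => t ≠ []) (t₁.tail ::ₘ s₁.tail ::ₘ s₂.tail ::ₘ t₂ ::ₘ v)) g + 2
        ≤ tileCount B₀ g := by
      have e1 : tileCount
          (Multiset.filter (fun t => t ≠ []) (t₁.tail ::ₘ s₁.tail ::ₘ s₂.tail ::ₘ t₂ ::ₘ v)) g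
          = t₁.tail.count g + (s₁.tail.count g + (s₂.tail.count g + (t₂.count g + tileCount v g))) := by
        simp [tileCount_filter, tileCount_cons]
      omega
    have hE2 : RSolvable B₀
        (Multiset.filter (fun t => t ≠ [])
          (t₂.tail ::ₘ t₁.tail ::ₘ s₁.tail ::ₘ s₂.tail ::ₘ v)) := by
      have := single_preserve B₀ hE1 hD2 ht₂ hcnt2
      rwa [filter_cons_filter] at this
    -- now build the path from play t₁ t₂ (s₁ ::ₘ s₂ ::ₘ v)
    have hgoal : play t₁ t₂ (s₁ ::ₘ s₂ ::ₘ v)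
        = s₁ ::ₘ Multiset.filter (fun t => t ≠ []) (t₁.tail ::ₘ t₂.tail ::ₘ s₂ ::ₘ v) := by
      unfold play
      rw [show t₁.tail ::ₘ t₂.tail ::ₘ s₁ ::ₘ s₂ ::ₘ v
          = s₁ ::ₘ t₁.tail ::ₘ t₂.tail ::ₘ s₂ ::ₘ v from by
        ext x; simp [Multiset.count_cons]; ring]
      exact filter_cons_pos s₁ (head?_ne_nil hs₁) _
    have hcnt3 : tileCount
        (s₁ ::ₘ Multiset.filter (fun t => t ≠ []) (t₁.tail ::ₘ t₂.tail ::ₘ s₂ ::ₘ v)) g + 2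
        ≤ tileCount B₀ g := by
      have e1 : tileCount
          (s₁ ::ₘ Multiset.filter (fun t => t ≠ []) (t₁.tail ::ₘ t₂.tail ::ₘ s₂ ::ₘ v)) g
          = s₁.count g + (t₁.tail.count g + (t₂.tail.count g + (s₂.count g + tileCount v g))) := by
        simp [tileCount_cons, tileCount_filter]
      omega
    rw [hgoal]
    refine Relation.ReflTransGen.head (Or.inr ⟨g, s₁, _, rfl, hs₁, hcnt3, rfl⟩) ?_
    rw [filter_cons_filter]
    have hmid : Multiset.filter (fun t => t ≠ []) (s₁.tail ::ₘ t₁.tail ::ₘ t₂.tail ::ₘ s₂ ::ₘ v)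
        = s₂ ::ₘ Multiset.filter (fun t => t ≠ []) (s₁.tail ::ₘ t₁.tail ::ₘ t₂.tail ::ₘ v) := by
      rw [show s₁.tail ::ₘ t₁.tail ::ₘ t₂.tail ::ₘ s₂ ::ₘ v
          = s₂ ::ₘ s₁.tail ::ₘ t₁.tail ::ₘ t₂.tail ::ₘ v from by
        ext x; simp [Multiset.count_cons]; ring]
      exact filter_cons_pos s₂ (head?_ne_nil hs₂) _
    have hcnt4 : tileCount
        (s₂ ::ₘ Multiset.filter (fun t => t ≠ []) (s₁.tail ::ₘ t₁.tail ::ₘ t₂.tail ::ₘ v)) g + 2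
        ≤ tileCount B₀ g := by
      have e1 : tileCount
          (s₂ ::ₘ Multiset.filter (fun t => t ≠ []) (s₁.tail ::ₘ t₁.tail ::ₘ t₂.tail ::ₘ v)) g
          = s₂.count g + (s₁.tail.count g + (t₁.tail.count g + (t₂.tail.count g + tileCount v g))) := by
        simp [tileCount_cons, tileCount_filter]
      omega
    rw [hmid]
    refine Relation.ReflTransGen.head (Or.inr ⟨g, s₂, _, rfl, hs₂, hcnt4, rfl⟩) ?_
    rw [filter_cons_filter]
    rw [show s₂.tail ::ₘ s₁.tail ::ₘ t₁.tail ::ₘ t₂.tail ::ₘ v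
        = t₂.tail ::ₘ t₁.tail ::ₘ s₁.tail ::ₘ s₂.tail ::ₘ v from by
      ext x; simp [Multiset.count_cons]; ring]
    exact hE2

/-- in the relaxed game it is impossible to play the wrong first
match of a group: at any reachable position where group `g` is still untouched,
if playing one playable pair of `g` leads to a relaxed solution, then so does
playing any other playable pair of `g`. -/
theorem stmt15 (B₀ C : Board G) (g : G)
    (hreach : Relation.ReflTransGen (RMove B₀) B₀ C)
    (hfresh : tileCount C g = tileCount B₀ g)
    (s₁ s₂ t₁ t₂ : List G) (r₁ r₂ : Board G)
    (h1 : C = s₁ ::ₘ s₂ ::ₘ r₁) (hs₁ : s₁.head? = some g) (hs₂ : s₂.head? = some g)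
    (h2 : C = t₁ ::ₘ t₂ ::ₘ r₂) (ht₁ : t₁.head? = some g) (ht₂ : t₂.head? = some g)
    (hsolv : RSolvable B₀ (play s₁ s₂ r₁)) :
    RSolvable B₀ (play t₁ t₂ r₂) := by
  by_cases e1 : t₁ = s₁
  · exact core B₀ C g hfresh s₁ s₂ t₁ t₂ r₁ r₂ h1 hs₁ hs₂ h2 ht₁ ht₂ hsolv (Or.inl e1)
  by_cases e2 : t₁ = s₂
  · exact core B₀ C g hfresh s₂ s₁ t₁ t₂ r₁ r₂ (by rw [h1, Multiset.cons_swap]) hs₂ hs₁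
      h2 ht₁ ht₂ (by rwa [swap_play]) (Or.inl e2)
  by_cases e3 : t₂ = s₁
  · rw [swap_play]
    exact core B₀ C g hfresh s₁ s₂ t₂ t₁ r₁ r₂ h1 hs₁ hs₂
      (by rw [h2, Multiset.cons_swap]) ht₂ ht₁ hsolv (Or.inl e3)
  by_cases e4 : t₂ = s₂
  · rw [swap_play]
    exact core B₀ C g hfresh s₂ s₁ t₂ t₁ r₁ r₂ (by rw [h1, Multiset.cons_swap]) hs₂ hs₁
      (by rw [h2, Multiset.cons_swap]) ht₂ ht₁ (by rwa [swap_play]) (Or.inl e4)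
  · exact core B₀ C g hfresh s₁ s₂ t₁ t₂ r₁ r₂ h1 hs₁ hs₂ h2 ht₁ ht₂ hsolv
      (Or.inr ⟨e1, e2, e3, e4⟩)
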